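/- Let m ≥ 1 and let H : (-∞, s₀] → ℝ be continuous and positive with e^{2mt}H(t) integrable. Then the function b(s) = (1/(2m)) e^{ms} ∫_{s₀}^s H(t) dt + (1/(2m)) e^{m(s-2s₀)} ∫_{-∞}^{s₀} e^{2mt}H(t) dt - (1/(2m)) e^{-ms} ∫_{-∞}^s e^{2mt}H(t) dt solves b'' - m²b = e^{ms}H(s), satisfies b(-∞) = 0 and b(s₀) = 0, and b'(s₀) = e^{-ms₀} ∫_{-∞}^{s₀} e^{2mt} H(t) dt > 0. -/

import Mathlib

open Set Filter Topology MeasureTheory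

/-- Explicit solution of `b'' - m²b = e^{ms}H(s)` with `b(-∞) = 0` and `b(s₀) = 0`:
the stated formula solves the ODE, vanishes at `-∞` and at `s₀`, and
`b'(s₀) = e^{-ms₀} ∫_{-∞}^{s₀} e^{2mt}H(t) dt > 0`. -/
theorem stmt8 (m : ℕ) (hm : 1 ≤ m) (s₀ : ℝ) (H : ℝ → ℝ)
    (hHc : ContinuousOn H (Iic s₀))
    (hHpos : ∀ t ∈ Iic s₀, 0 < H t)
    (hint : IntegrableOn (fun t => Real.exp (2 * (m : ℝ) * t) * H t) (Iic s₀))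
    (hint2 : IntegrableOn H (Iic s₀))
    (b : ℝ → ℝ)
    (hb : ∀ x, b x =
        (1 / (2 * (m : ℝ))) * Real.exp ((m : ℝ) * x) * (∫ t in s₀..x, H t)
      + (1 / (2 * (m : ℝ))) * Real.exp ((m : ℝ) * (x - 2 * s₀)) *
          (∫ t in Iic s₀, Real.exp (2 * (m : ℝ) * t) * H t)
      - (1 / (2 * (m : ℝ))) * Real.exp (-((m : ℝ) * x)) *
          (∫ t in Iic x, Real.exp (2 * (m : ℝ) * t) * H t)) :
    (∀ x < s₀, deriv (deriv b) x - (m : ℝ) ^ 2 * b x = Real.exp ((m : ℝ) * x) * H x) ∧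
    Tendsto b atBot (𝓝 0) ∧
    b s₀ = 0 ∧
    derivWithin b (Iic s₀) s₀ =
      Real.exp (-((m : ℝ) * s₀)) * (∫ t in Iic s₀, Real.exp (2 * (m : ℝ) * t) * H t) ∧
    0 < derivWithin b (Iic s₀) s₀ := by
  have hM : (0:ℝ) < (m:ℝ) := by exact_mod_cast hm
  set M : ℝ := (m : ℝ) with hMdef
  have hMne : M ≠ 0 := ne_of_gt hM
  set C : ℝ := ∫ t in Iic s₀, Real.exp (2 * M * t) * H t with hCdef
  set F : ℝ → ℝ := fun x => ∫ t in s₀..x, H t with hFdef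
  set I : ℝ → ℝ := fun x => ∫ t in s₀..x, Real.exp (2 * M * t) * H t with hIdef
  set c : ℝ := 1 / (2 * M) with hcdef
  set bt : ℝ → ℝ := fun x =>
    c * Real.exp (M * x) * F x + c * Real.exp (M * (x - 2 * s₀)) * C
      - c * Real.exp (-(M * x)) * (C + I x) with hbtdef
  set bd : ℝ → ℝ := fun x =>
    (1/2) * (Real.exp (M * x) * F x + Real.exp (M * (x - 2 * s₀)) * C
      + Real.exp (-(M * x)) * (C + I x)) with hbddef
  -- key identity
  have key : ∀ x ≤ s₀, (∫ t in Iic x, Real.exp (2 * M * t) * H t) = C + I x := by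
    intro x hx
    have h1 : IntegrableOn (fun t => Real.exp (2 * M * t) * H t) (Iic x) :=
      hint.mono_set (Iic_subset_Iic.mpr hx)
    have h2 := intervalIntegral.integral_Iic_sub_Iic hint h1
    simp only [hIdef, hCdef]
    linarith [h2]
  have hbb : ∀ x ≤ s₀, b x = bt x := by
    intro x hx
    rw [hb x, key x hx]
  -- interval integrability
  have hHint : ∀ x ≤ s₀, IntervalIntegrable H volume s₀ x := fun x hx =>
    (hint2.mono_set (by rw [Set.uIcc_of_ge hx]; exact Set.Icc_subset_Iic_self)).intervalIntegrable
  have hgint : ∀ x ≤ s₀, IntervalIntegrable (fun t => Real.exp (2 * M * t) * H t) volume s₀ x :=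
    fun x hx =>
    (hint.mono_set (by rw [Set.uIcc_of_ge hx]; exact Set.Icc_subset_Iic_self)).intervalIntegrable
  have hgc : ContinuousOn (fun t => Real.exp (2 * M * t) * H t) (Iic s₀) :=
    ((Real.continuous_exp.comp (continuous_const.mul continuous_id)).continuousOn).mul hHc
  -- FTC at interior points
  have hFd : ∀ x, x < s₀ → HasDerivAt F (H x) x := fun x hx =>
    intervalIntegral.integral_hasDerivAt_right (hHint x hx.le)
      (ContinuousOn.stronglyMeasurableAtFilter isOpen_Iio (hHc.mono Iio_subset_Iic_self) x hx)
      (hHc.continuousAt (Iic_mem_nhds hx))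
  have hId : ∀ x, x < s₀ → HasDerivAt I (Real.exp (2 * M * x) * H x) x := fun x hx =>
    intervalIntegral.integral_hasDerivAt_right (hgint x hx.le)
      (ContinuousOn.stronglyMeasurableAtFilter isOpen_Iio (hgc.mono Iio_subset_Iic_self) x hx)
      (hgc.continuousAt (Iic_mem_nhds hx))
  -- main derivative computation
  have mainA : ∀ (s : Set ℝ) (x : ℝ), HasDerivWithinAt F (H x) s x →
      HasDerivWithinAt I (Real.exp (2 * M * x) * H x) s x →
      HasDerivWithinAt bt (bd x) s x := by
    intro s x hF' hI'
    have e1 : HasDerivWithinAt (fun y => Real.exp (M * y)) (Real.exp (M * x) * (M * 1)) s x :=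
      (((hasDerivAt_id x).const_mul M).exp).hasDerivWithinAt
    have e2 : HasDerivWithinAt (fun y => Real.exp (M * (y - 2 * s₀)))
        (Real.exp (M * (x - 2 * s₀)) * (M * 1)) s x :=
      ((((hasDerivAt_id x).sub_const (2 * s₀)).const_mul M).exp).hasDerivWithinAt
    have e3 : HasDerivWithinAt (fun y => Real.exp (-(M * y)))
        (Real.exp (-(M * x)) * (-(M * 1))) s x :=
      ((((hasDerivAt_id x).const_mul M).neg).exp).hasDerivWithinAt
    have t1 := (e1.const_mul c).mul hF'
    have t2 := (e2.const_mul c).mul_const C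
    have t3 := (e3.const_mul c).mul (hI'.const_add C)
    have hd := (t1.add t2).sub t3
    refine hd.congr_deriv ?_
    have hexp2 : Real.exp (2 * M * x) = Real.exp (M * x) * Real.exp (M * x) := by
      rw [← Real.exp_add]; ring_nf
    have hexpn : Real.exp (-(M * x)) = (Real.exp (M * x))⁻¹ := Real.exp_neg _
    have h0 : Real.exp (M * x) ≠ 0 := Real.exp_ne_zero _
    simp only [hbddef, hcdef, hexp2, hexpn]
    field_simp
    ring
  have mainB : ∀ x : ℝ, HasDerivAt F (H x) x →
      HasDerivAt I (Real.exp (2 * M * x) * H x) x →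
      HasDerivAt bd (M ^ 2 * bt x + Real.exp (M * x) * H x) x := by
    intro x hF' hI'
    have e1 : HasDerivAt (fun y => Real.exp (M * y)) (Real.exp (M * x) * (M * 1)) x :=
      ((hasDerivAt_id x).const_mul M).exp
    have e2 : HasDerivAt (fun y => Real.exp (M * (y - 2 * s₀)))
        (Real.exp (M * (x - 2 * s₀)) * (M * 1)) x :=
      (((hasDerivAt_id x).sub_const (2 * s₀)).const_mul M).exp
    have e3 : HasDerivAt (fun y => Real.exp (-(M * y)))
        (Real.exp (-(M * x)) * (-(M * 1))) x :=
      (((hasDerivAt_id x).const_mul M).neg).exp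
    have hd := (((e1.mul hF').add (e2.mul_const C)).add (e3.mul (hI'.const_add C))).const_mul (1/2)
    refine hd.congr_deriv ?_
    have hexp2 : Real.exp (2 * M * x) = Real.exp (M * x) * Real.exp (M * x) := by
      rw [← Real.exp_add]; ring_nf
    have hexpn : Real.exp (-(M * x)) = (Real.exp (M * x))⁻¹ := Real.exp_neg _
    have h0 : Real.exp (M * x) ≠ 0 := Real.exp_ne_zero _
    simp only [hbtdef, hcdef, hexp2, hexpn]
    field_simp
    ring
  have hbtd : ∀ x, x < s₀ → HasDerivAt bt (bd x) x := fun x hx =>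
    hasDerivWithinAt_univ.mp
      (mainA univ x (hFd x hx).hasDerivWithinAt (hId x hx).hasDerivWithinAt)
  have hbd' : ∀ x, x < s₀ → HasDerivAt b (bd x) x := by
    intro x hx
    have hev : b =ᶠ[𝓝 x] bt := by
      filter_upwards [Iio_mem_nhds hx] with y hy
      exact hbb y (le_of_lt hy)
    exact (hbtd x hx).congr_of_eventuallyEq hev
  refine ⟨?_, ?_, ?_, ?_, ?_⟩
  -- ODE
  · intro x hx
    have hdd : deriv b =ᶠ[𝓝 x] bd := by
      filter_upwards [Iio_mem_nhds hx] with y hy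
      exact (hbd' y hy).deriv
    have h2 : deriv (deriv b) x = M ^ 2 * bt x + Real.exp (M * x) * H x := by
      rw [hdd.deriv_eq]
      exact (mainB x (hFd x hx) (hId x hx)).deriv
    rw [h2, hbb x (le_of_lt hx)]
    ring
  -- limit at -∞
  · have hM2 : Tendsto (fun x : ℝ => M * x) atBot atBot :=
      Tendsto.const_mul_atBot hM tendsto_id
    have hexp0 : Tendsto (fun x => Real.exp (M * x)) atBot (𝓝 0) :=
      Real.tendsto_exp_atBot.comp hM2
    have hM3 : Tendsto (fun x : ℝ => x - 2 * s₀) atBot atBot := by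
      simpa [sub_eq_add_neg] using
        tendsto_atBot_add_const_right atBot (-(2 * s₀)) (tendsto_id (α := ℝ))
    have hexp2' : Tendsto (fun x => Real.exp (M * (x - 2 * s₀))) atBot (𝓝 0) :=
      Real.tendsto_exp_atBot.comp (Tendsto.const_mul_atBot hM hM3)
    have hFlim : Tendsto F atBot (𝓝 (-(∫ t in Iic s₀, H t))) := by
      have h1 : Tendsto (fun x => ∫ t in x..s₀, H t) atBot (𝓝 (∫ t in Iic s₀, H t)) :=
        MeasureTheory.intervalIntegral_tendsto_integral_Iic s₀ hint2 tendsto_id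
      refine h1.neg.congr fun x => ?_
      simp only [hFdef]
      exact (intervalIntegral.integral_symm x s₀).symm
    have hae : 0 ≤ᵐ[volume.restrict (Iic s₀)] H :=
      (ae_restrict_iff' measurableSet_Iic).mpr (ae_of_all _ fun t ht => (hHpos t ht).le)
    have hsq : Tendsto (fun x => Real.exp (-(M * x)) * (C + I x)) atBot (𝓝 0) := by
      have hupper : Tendsto (fun x => Real.exp (M * x) * (∫ t in Iic s₀, H t)) atBot (𝓝 0) := by
        simpa using hexp0.mul_const (∫ t in Iic s₀, H t)
      refine tendsto_of_tendsto_of_tendsto_of_le_of_le' tendsto_const_nhds hupper ?_ ?_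
      · filter_upwards [eventually_le_atBot s₀] with x hx
        rw [← key x hx]
        exact mul_nonneg (Real.exp_pos _).le
          (setIntegral_nonneg measurableSet_Iic fun t ht =>
            mul_nonneg (Real.exp_pos _).le (hHpos t (le_trans ht hx)).le)
      · filter_upwards [eventually_le_atBot s₀] with x hx
        rw [← key x hx]
        calc Real.exp (-(M * x)) * ∫ t in Iic x, Real.exp (2 * M * t) * H t
            ≤ Real.exp (-(M * x)) * (Real.exp (2 * M * x) * ∫ t in Iic s₀, H t) := by
              refine mul_le_mul_of_nonneg_left ?_ (Real.exp_pos _).le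
              calc (∫ t in Iic x, Real.exp (2 * M * t) * H t)
                  ≤ ∫ t in Iic x, Real.exp (2 * M * x) * H t := by
                    refine setIntegral_mono_on (hint.mono_set (Iic_subset_Iic.mpr hx))
                      ((hint2.mono_set (Iic_subset_Iic.mpr hx)).const_mul _)
                      measurableSet_Iic fun t ht => ?_
                    exact mul_le_mul_of_nonneg_right
                      (Real.exp_le_exp.mpr (by nlinarith [hM, ht.out])) (hHpos t (ht.trans hx)).le
                _ = Real.exp (2 * M * x) * ∫ t in Iic x, H t := by
                    rw [MeasureTheory.integral_const_mul]
                _ ≤ Real.exp (2 * M * x) * ∫ t in Iic s₀, H t :=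
                    mul_le_mul_of_nonneg_left
                      (setIntegral_mono_set hint2 hae
                        (HasSubset.Subset.eventuallyLE (Iic_subset_Iic.mpr hx)))
                      (Real.exp_pos _).le
          _ = Real.exp (M * x) * ∫ t in Iic s₀, H t := by
              rw [← mul_assoc, ← Real.exp_add]
              congr 2
              ring
    have t1 : Tendsto (fun x => c * Real.exp (M * x) * F x) atBot (𝓝 0) := by
      have := (hexp0.const_mul c).mul hFlim
      simpa [mul_assoc] using this
    have t2 : Tendsto (fun x => c * Real.exp (M * (x - 2 * s₀)) * C) atBot (𝓝 0) := by
      simpa using (hexp2'.const_mul c).mul_const C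
    have t3 : Tendsto (fun x => c * Real.exp (-(M * x)) * (C + I x)) atBot (𝓝 0) := by
      have := hsq.const_mul c
      simpa [mul_assoc] using this
    have hbt_lim : Tendsto bt atBot (𝓝 0) := by
      have := (t1.add t2).sub t3
      simpa using this
    refine hbt_lim.congr' ?_
    filter_upwards [eventually_le_atBot s₀] with x hx
    exact (hbb x hx).symm
  -- b s₀ = 0
  · rw [hbb s₀ le_rfl]
    simp only [hbtdef, hFdef, hIdef, intervalIntegral.integral_same]
    rw [show M * (s₀ - 2 * s₀) = -(M * s₀) by ring]
    ring
  -- derivWithin value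
  · have hFd₀ : HasDerivWithinAt F (H s₀) (Iic s₀) s₀ :=
      intervalIntegral.integral_hasDerivWithinAt_right (hHint s₀ le_rfl)
        (hHc.stronglyMeasurableAtFilter_nhdsWithin measurableSet_Iic s₀)
        (hHc s₀ self_mem_Iic)
    have hId₀ : HasDerivWithinAt I (Real.exp (2 * M * s₀) * H s₀) (Iic s₀) s₀ :=
      intervalIntegral.integral_hasDerivWithinAt_right (hgint s₀ le_rfl)
        (hgc.stronglyMeasurableAtFilter_nhdsWithin measurableSet_Iic s₀)
        (hgc s₀ self_mem_Iic)
    have hd₀ : HasDerivWithinAt bt (bd s₀) (Iic s₀) s₀ := mainA (Iic s₀) s₀ hFd₀ hId₀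
    have hbd₀ : HasDerivWithinAt b (bd s₀) (Iic s₀) s₀ :=
      hd₀.congr (fun y hy => hbb y hy) (hbb s₀ le_rfl)
    have hbdval : bd s₀ = Real.exp (-(M * s₀)) * C := by
      simp only [hbddef, hFdef, hIdef, intervalIntegral.integral_same]
      rw [show M * (s₀ - 2 * s₀) = -(M * s₀) by ring]
      ring
    rw [← hbdval]
    exact hbd₀.derivWithin (uniqueDiffOn_Iic s₀ s₀ self_mem_Iic)
  -- positivity
  · have hFd₀ : HasDerivWithinAt F (H s₀) (Iic s₀) s₀ :=
      intervalIntegral.integral_hasDerivWithinAt_right (hHint s₀ le_rfl)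
        (hHc.stronglyMeasurableAtFilter_nhdsWithin measurableSet_Iic s₀)
        (hHc s₀ self_mem_Iic)
    have hId₀ : HasDerivWithinAt I (Real.exp (2 * M * s₀) * H s₀) (Iic s₀) s₀ :=
      intervalIntegral.integral_hasDerivWithinAt_right (hgint s₀ le_rfl)
        (hgc.stronglyMeasurableAtFilter_nhdsWithin measurableSet_Iic s₀)
        (hgc s₀ self_mem_Iic)
    have hd₀ : HasDerivWithinAt bt (bd s₀) (Iic s₀) s₀ := mainA (Iic s₀) s₀ hFd₀ hId₀
    have hbd₀ : HasDerivWithinAt b (bd s₀) (Iic s₀) s₀ :=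
      hd₀.congr (fun y hy => hbb y hy) (hbb s₀ le_rfl)
    have hbdval : bd s₀ = Real.exp (-(M * s₀)) * C := by
      simp only [hbddef, hFdef, hIdef, intervalIntegral.integral_same]
      rw [show M * (s₀ - 2 * s₀) = -(M * s₀) by ring]
      ring
    have hCpos : 0 < C := by
      rw [hCdef]
      rw [setIntegral_pos_iff_support_of_nonneg_ae
        ((ae_restrict_iff' measurableSet_Iic).mpr (ae_of_all _ fun t ht =>
          (mul_pos (Real.exp_pos _) (hHpos t ht)).le)) hint]
      refine lt_of_lt_of_le ?_ (measure_mono (fun t ht =>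
        ⟨ne_of_gt (mul_pos (Real.exp_pos _) (hHpos t ht)), ht⟩ :
        Iic s₀ ⊆ Function.support (fun t => Real.exp (2 * M * t) * H t) ∩ Iic s₀))
      simp [Real.volume_Iic]
    rw [hbd₀.derivWithin (uniqueDiffOn_Iic s₀ s₀ self_mem_Iic), hbdval]
    exact mul_pos (Real.exp_pos _) hCpos
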